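/- Let A(n) (n ≥ 4) be the graph with vertices (i,x) for 1 ≤ i ≤ n and x ∈ Z/4, where (i,x) ~ (i,x+1) for all i, x, and (i,x) ~ (i',x+2) whenever i ≠ i'. Then A(n) is triangle-free, twin-free, and every independent set of at most 3 vertices has a common neighbor. -/

import Mathlib

/-- Albert's graph `A(n)`: vertices `(i, x)` with `i ∈ Fin n`, `x ∈ Z/4`;
`(i,x) ~ (i,x+1)` and `(i,x) ~ (i',x+2)` for `i ≠ i'`. -/
def albertA (n : ℕ) : SimpleGraph (Fin n × ZMod 4) where
  Adj p q := (p.1 = q.1 ∧ (q.2 = p.2 + 1 ∨ p.2 = q.2 + 1)) ∨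
    (p.1 ≠ q.1 ∧ q.2 = p.2 + 2)
  symm := by
    refine ⟨?_⟩
    rintro ⟨i, x⟩ ⟨i', x'⟩ (⟨h1, h2⟩ | ⟨h1, h2⟩)
    · exact Or.inl ⟨h1.symm, h2.symm⟩
    · refine Or.inr ⟨h1.symm, ?_⟩
      rw [h2, add_assoc, show (2 : ZMod 4) + 2 = 0 by decide, add_zero]
  loopless := by
    refine ⟨?_⟩
    rintro ⟨i, x⟩ (⟨-, h | h⟩ | ⟨h, -⟩) <;> simp_all <;> exact absurd h (by decide)

lemma albertA_adj {n : ℕ} {p q : Fin n × ZMod 4} :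
    (albertA n).Adj p q ↔ ((p.1 = q.1 ∧ (q.2 = p.2 + 1 ∨ p.2 = q.2 + 1)) ∨
      (p.1 ≠ q.1 ∧ q.2 = p.2 + 2)) := Iff.rfl

lemma fresh {n : ℕ} (hn : 4 ≤ n) (a b c : Fin n) :
    ∃ j : Fin n, j ≠ a ∧ j ≠ b ∧ j ≠ c := by
  by_contra hc
  push_neg at hc
  have hsub : (Finset.univ : Finset (Fin n)) ⊆ {a, b, c} := by
    intro j _
    simp only [Finset.mem_insert, Finset.mem_singleton]
    rcases eq_or_ne j a with h | h
    · exact Or.inl h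
    rcases eq_or_ne j b with h' | h'
    · exact Or.inr (Or.inl h')
    · exact Or.inr (Or.inr (hc j h h'))
  have h1 := Finset.card_le_card hsub
  have h2 : ({a, b, c} : Finset (Fin n)).card ≤ 3 := by
    refine (Finset.card_insert_le _ _).trans ?_
    have := (Finset.card_insert_le b ({c} : Finset (Fin n)))
    simp at this ⊢
    omega
  simp [Finset.card_univ] at h1
  omega

lemma dom2 {n : ℕ} (hn : 4 ≤ n) (p q : Fin n × ZMod 4) (hpq : p ≠ q)
    (h : ¬ (albertA n).Adj p q) :
    ∃ v, (albertA n).Adj v p ∧ (albertA n).Adj v q := by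
  obtain ⟨i, x⟩ := p
  obtain ⟨j, y⟩ := q
  by_cases hij : i = j
  · subst hij
    have hxy : x ≠ y := fun hh => hpq (by rw [hh])
    have h2 : ¬(y = x + 1 ∨ x = y + 1) := fun w => h (Or.inl ⟨rfl, w⟩)
    obtain ⟨w, hw1, hw2⟩ := (show ∀ x y : ZMod 4, x ≠ y → ¬(y = x+1 ∨ x = y+1) →
      ∃ w, (x = w+1 ∨ w = x+1) ∧ (y = w+1 ∨ w = y+1) by decide) x y hxy h2
    exact ⟨(i, w), Or.inl ⟨rfl, hw1⟩, Or.inl ⟨rfl, hw2⟩⟩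
  · have h2 : y ≠ x + 2 := fun w => h (Or.inr ⟨hij, w⟩)
    rcases eq_or_ne x y with rfl | hxy
    · obtain ⟨l, hl1, hl2, -⟩ := fresh hn i j j
      exact ⟨(l, x+2), Or.inr ⟨hl1, (show ∀ x : ZMod 4, x = x+2+2 by decide) x⟩,
        Or.inr ⟨hl2, (show ∀ x : ZMod 4, x = x+2+2 by decide) x⟩⟩
    · obtain ⟨w, hw1, hw2⟩ := (show ∀ x y : ZMod 4, x ≠ y → y ≠ x+2 →
        ∃ w, (x = w+1 ∨ w = x+1) ∧ y = w+2 by decide) x y hxy h2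
      exact ⟨(i, w), Or.inl ⟨rfl, hw1⟩, Or.inr ⟨hij, hw2⟩⟩

lemma dom3 {n : ℕ} (hn : 4 ≤ n) (p q r : Fin n × ZMod 4)
    (hpq : p ≠ q) (hpr : p ≠ r) (hqr : q ≠ r)
    (h1 : ¬ (albertA n).Adj p q) (h2 : ¬ (albertA n).Adj p r)
    (h3 : ¬ (albertA n).Adj q r) :
    ∃ v, (albertA n).Adj v p ∧ (albertA n).Adj v q ∧ (albertA n).Adj v r := by
  have invol : ∀ a b : ZMod 4, a = b + 2 → b = a + 2 := by decide
  have key : ∀ x y z : ZMod 4, x ≠ y → ¬(y = x+1 ∨ x = y+1) → z ≠ x+2 → z ≠ y+2 →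
      ∃ w, (x = w+1 ∨ w = x+1) ∧ (y = w+1 ∨ w = y+1) ∧ z = w+2 := by decide
  have key2 : ∀ a b : ZMod 4, a ≠ b → b ≠ a+2 →
      ∃ w, (b = w+1 ∨ w = b+1) ∧ a = w+2 := by decide
  obtain ⟨i, x⟩ := p
  obtain ⟨j, y⟩ := q
  obtain ⟨k, z⟩ := r
  by_cases hij : i = j
  · subst hij
    by_cases hik : i = k
    · subst hik
      have hxy : x ≠ y := fun hh => hpq (by rw [hh])
      have hxz : x ≠ z := fun hh => hpr (by rw [hh])
      have hyz : y ≠ z := fun hh => hqr (by rw [hh])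
      have f1 : ¬(y = x+1 ∨ x = y+1) := fun w => h1 (Or.inl ⟨rfl, w⟩)
      have f2 : ¬(z = x+1 ∨ x = z+1) := fun w => h2 (Or.inl ⟨rfl, w⟩)
      have f3 : ¬(z = y+1 ∨ y = z+1) := fun w => h3 (Or.inl ⟨rfl, w⟩)
      exact ((show ∀ x y z : ZMod 4, x ≠ y → x ≠ z → y ≠ z →
        ¬(y = x+1 ∨ x = y+1) → ¬(z = x+1 ∨ x = z+1) → ¬(z = y+1 ∨ y = z+1) → False
        by decide) x y z hxy hxz hyz f1 f2 f3).elim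
    · -- p, q same row, r different
      have hxy : x ≠ y := fun hh => hpq (by rw [hh])
      have f1 : ¬(y = x+1 ∨ x = y+1) := fun w => h1 (Or.inl ⟨rfl, w⟩)
      have f2 : z ≠ x+2 := fun w => h2 (Or.inr ⟨hik, w⟩)
      have f3 : z ≠ y+2 := fun w => h3 (Or.inr ⟨hik, w⟩)
      obtain ⟨w, hw1, hw2, hw3⟩ := key x y z hxy f1 f2 f3
      exact ⟨(i, w), Or.inl ⟨rfl, hw1⟩, Or.inl ⟨rfl, hw2⟩, Or.inr ⟨hik, hw3⟩⟩
  · by_cases hik : i = k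
    · subst hik
      -- p, r same row, q different
      have hxz : x ≠ z := fun hh => hpr (by rw [hh])
      have f2' : ¬(z = x+1 ∨ x = z+1) := fun w => h2 (Or.inl ⟨rfl, w⟩)
      have f1 : y ≠ x+2 := fun w => h1 (Or.inr ⟨hij, w⟩)
      have f3 : z ≠ y+2 := fun w => h3 (Or.inr ⟨fun hh => hij hh.symm, w⟩)
      have f3' : y ≠ z + 2 := fun w => f3 (invol y z w)
      obtain ⟨w, hw1, hw2, hw3⟩ := key x z y hxz f2' f1 f3'
      exact ⟨(i, w), Or.inl ⟨rfl, hw1⟩, Or.inr ⟨hij, hw3⟩, Or.inl ⟨rfl, hw2⟩⟩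
    · by_cases hjk : j = k
      · subst hjk
        -- q, r same row, p different
        have hyz : y ≠ z := fun hh => hqr (by rw [hh])
        have f3' : ¬(z = y+1 ∨ y = z+1) := fun w => h3 (Or.inl ⟨rfl, w⟩)
        have f1 : y ≠ x+2 := fun w => h1 (Or.inr ⟨hij, w⟩)
        have f2 : z ≠ x+2 := fun w => h2 (Or.inr ⟨hik, w⟩)
        have f1' : x ≠ y + 2 := fun w => f1 (invol x y w)
        have f2' : x ≠ z + 2 := fun w => f2 (invol x z w)
        obtain ⟨w, hw1, hw2, hw3⟩ := key y z x hyz f3' f1' f2'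
        exact ⟨(j, w), Or.inr ⟨fun hh => hij hh.symm, hw3⟩,
          Or.inl ⟨rfl, hw1⟩, Or.inl ⟨rfl, hw2⟩⟩
      · -- all rows distinct
        have f1 : y ≠ x+2 := fun w => h1 (Or.inr ⟨hij, w⟩)
        have f2 : z ≠ x+2 := fun w => h2 (Or.inr ⟨hik, w⟩)
        have f3 : z ≠ y+2 := fun w => h3 (Or.inr ⟨hjk, w⟩)
        rcases eq_or_ne x y with rfl | hxy
        · rcases eq_or_ne x z with rfl | hxz
          · obtain ⟨l, hl1, hl2, hl3⟩ := fresh hn i j k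
            have e : x = x + 2 + 2 := (show ∀ x : ZMod 4, x = x+2+2 by decide) x
            exact ⟨(l, x+2), Or.inr ⟨hl1, e⟩, Or.inr ⟨hl2, e⟩, Or.inr ⟨hl3, e⟩⟩
          · -- x = y ≠ z
            obtain ⟨w, hw1, hw2⟩ := key2 x z hxz f2
            exact ⟨(k, w), Or.inr ⟨fun hh => hik hh.symm, hw2⟩,
              Or.inr ⟨fun hh => hjk hh.symm, hw2⟩, Or.inl ⟨rfl, hw1⟩⟩
        · rcases eq_or_ne y z with rfl | hyz
          · -- y = z ≠ x
            have f1' : x ≠ y + 2 := fun w => f1 (invol x y w)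
            obtain ⟨w, hw1, hw2⟩ := key2 y x hxy.symm f1'
            exact ⟨(i, w), Or.inl ⟨rfl, hw1⟩, Or.inr ⟨hij, hw2⟩, Or.inr ⟨hik, hw2⟩⟩
          · rcases eq_or_ne x z with rfl | hxz
            · -- x = z ≠ y
              obtain ⟨w, hw1, hw2⟩ := key2 x y hxy f1
              exact ⟨(j, w), Or.inr ⟨fun hh => hij hh.symm, hw2⟩,
                Or.inl ⟨rfl, hw1⟩, Or.inr ⟨hjk, hw2⟩⟩
            · exact ((show ∀ x y z : ZMod 4, x ≠ y → y ≠ z → x ≠ z →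
                y ≠ x+2 → z ≠ x+2 → z ≠ y+2 → False by decide)
                x y z hxy hyz hxz f1 f2 f3).elim

theorem stmt_9 (n : ℕ) (hn : 4 ≤ n) :
    (albertA n).CliqueFree 3 ∧
    (∀ p q : Fin n × ZMod 4,
      (albertA n).neighborSet p = (albertA n).neighborSet q → p = q) ∧
    (∀ S : Finset (Fin n × ZMod 4), S.card ≤ 3 →
      (∀ p ∈ S, ∀ q ∈ S, p ≠ q → ¬ (albertA n).Adj p q) →
      ∃ v, ∀ p ∈ S, (albertA n).Adj v p) := by
  refine ⟨?_, ?_, ?_⟩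
  · -- triangle-free
    intro S hS
    obtain ⟨a, b, c, hab, hac, hbc, rfl⟩ := Finset.card_eq_three.mp hS.2
    have h1 : (albertA n).Adj a b := hS.1 (by simp) (by simp) hab
    have h2 : (albertA n).Adj a c := hS.1 (by simp) (by simp) hac
    have h3 : (albertA n).Adj b c := hS.1 (by simp) (by simp) hbc
    obtain ⟨i, x⟩ := a
    obtain ⟨j, y⟩ := b
    obtain ⟨k, z⟩ := c
    rw [albertA_adj] at h1 h2 h3
    rcases h1 with ⟨e1, f1⟩ | ⟨e1, f1⟩ <;> rcases h2 with ⟨e2, f2⟩ | ⟨e2, f2⟩ <;>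
      rcases h3 with ⟨e3, f3⟩ | ⟨e3, f3⟩
    · exact (show ∀ x y z : ZMod 4, (y=x+1∨x=y+1) → (z=x+1∨x=z+1) →
        (z=y+1∨y=z+1) → False by decide) x y z f1 f2 f3
    · exact e3 (e1.symm.trans e2)
    · exact e2 (e1.trans e3)
    · exact (show ∀ x y z : ZMod 4, (y=x+1∨x=y+1) → z=x+2 → z=y+2 → False
        by decide) x y z f1 f2 f3
    · exact e1 (e2.trans e3.symm)
    · exact (show ∀ x y z : ZMod 4, y=x+2 → (z=x+1∨x=z+1) → z=y+2 → False
        by decide) x y z f1 f2 f3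
    · exact (show ∀ x y z : ZMod 4, y=x+2 → z=x+2 → (z=y+1∨y=z+1) → False
        by decide) x y z f1 f2 f3
    · exact (show ∀ x y z : ZMod 4, y=x+2 → z=x+2 → z=y+2 → False
        by decide) x y z f1 f2 f3
  · -- twin-free
    intro p q hN
    have key : ∀ v, (albertA n).Adj p v ↔ (albertA n).Adj q v := by
      intro v
      rw [← SimpleGraph.mem_neighborSet, ← SimpleGraph.mem_neighborSet, hN]
    obtain ⟨i, x⟩ := p
    obtain ⟨j, y⟩ := q
    by_cases hij : i = j
    · subst hij
      by_cases hxy : x = y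
      · rw [hxy]
      exfalso
      have h1 := (key (i, x+1)).mp (Or.inl ⟨rfl, Or.inl rfl⟩)
      rcases h1 with ⟨-, h1⟩ | ⟨h1, -⟩
      · have hy : y = x + 2 := (show ∀ x y : ZMod 4, x ≠ y →
          (x+1 = y+1 ∨ y = x+1+1) → y = x+2 by decide) x y hxy h1
        obtain ⟨l, hl1, -, -⟩ := fresh hn i i i
        have h2 := (key (l, x+2)).mp (Or.inr ⟨fun hh => hl1 hh.symm, rfl⟩)
        rcases h2 with ⟨h2, -⟩ | ⟨-, h2⟩
        · exact hl1 h2.symm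
        · exact (show ∀ x y : ZMod 4, y = x+2 → x+2 = y+2 → False by decide)
            x y hy h2
      · exact h1 rfl
    · exfalso
      have h1 := (key (i, x+1)).mp (Or.inl ⟨rfl, Or.inl rfl⟩)
      rcases h1 with ⟨h1, -⟩ | ⟨-, h1⟩
      · exact hij h1.symm
      have h2 := (key (i, x+3)).mp
        (Or.inl ⟨rfl, Or.inr ((show ∀ x : ZMod 4, x = x+3+1 by decide) x)⟩)
      rcases h2 with ⟨h2, -⟩ | ⟨-, h2⟩
      · exact hij h2.symm
      · exact (show ∀ x y : ZMod 4, x+1 = y+2 → x+3 = y+2 → False by decide)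
          x y h1 h2
  · -- domination
    intro S hScard hSind
    rcases (show S.card = 0 ∨ S.card = 1 ∨ S.card = 2 ∨ S.card = 3 by omega)
      with h | h | h | h
    · rw [Finset.card_eq_zero] at h
      subst h
      exact ⟨(⟨0, by omega⟩, 0), by simp⟩
    · obtain ⟨a, rfl⟩ := Finset.card_eq_one.mp h
      obtain ⟨v, hv⟩ : ∃ v, (albertA n).Adj v a :=
        ⟨(a.1, a.2+1), Or.inl ⟨rfl, Or.inr rfl⟩⟩
      exact ⟨v, by simpa using hv⟩
    · obtain ⟨a, b, hab, rfl⟩ := Finset.card_eq_two.mp h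
      obtain ⟨v, hv1, hv2⟩ := dom2 hn a b hab
        (hSind a (by simp) b (by simp) hab)
      refine ⟨v, ?_⟩
      intro p hp
      rcases Finset.mem_insert.mp hp with rfl | hp
      · exact hv1
      · rw [Finset.mem_singleton] at hp; subst hp; exact hv2
    · obtain ⟨a, b, c, hab, hac, hbc, rfl⟩ := Finset.card_eq_three.mp h
      obtain ⟨v, hv1, hv2, hv3⟩ := dom3 hn a b c hab hac hbc
        (hSind a (by simp) b (by simp) hab)
        (hSind a (by simp) c (by simp) hac)
        (hSind b (by simp) c (by simp) hbc)
      refine ⟨v, ?_⟩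
      intro p hp
      rcases Finset.mem_insert.mp hp with rfl | hp
      · exact hv1
      rcases Finset.mem_insert.mp hp with rfl | hp
      · exact hv2
      · rw [Finset.mem_singleton] at hp; subst hp; exact hv3
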